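/- For every θ ∈ [0, π/2] and every positive integer d, arccos((cos θ)^d) ≤ √d · θ. -/
import Mathlib
open Real

lemma aux_geom (d : ℕ) (u : ℝ) (h0 : 0 ≤ u) (h1 : u ≤ 1) :
    (d : ℝ) * u ^ (d - 1) * (1 - u) ≤ 1 - u ^ d := by
  have key : (d : ℝ) * u ^ (d - 1) ≤ ∑ i ∈ Finset.range d, u ^ i := by
    calc (d : ℝ) * u ^ (d - 1) = ∑ i ∈ Finset.range d, u ^ (d - 1) := by
          simp [Finset.sum_const, mul_comm]
      _ ≤ ∑ i ∈ Finset.range d, u ^ i := by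
          apply Finset.sum_le_sum
          intro i hi
          simp only [Finset.mem_range] at hi
          exact pow_le_pow_of_le_one h0 h1 (by omega)
  have hgeom : (1 - u) * ∑ i ∈ Finset.range d, u ^ i = 1 - u ^ d := by
    have := geom_sum_mul u d
    nlinarith [this]
  calc (d : ℝ) * u ^ (d - 1) * (1 - u) ≤ (∑ i ∈ Finset.range d, u ^ i) * (1 - u) := by
        apply mul_le_mul_of_nonneg_right key (by linarith)
    _ = 1 - u ^ d := by rw [mul_comm]; exact hgeom

/-- For every `θ ∈ [0, π/2]` and every positive integer `d`,
`arccos ((cos θ)^d) ≤ √d · θ`. -/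
theorem arccos_cos_pow_le (θ : ℝ) (h0 : 0 ≤ θ) (h1 : θ ≤ π / 2) (d : ℕ) (hd : 0 < d) :
    Real.arccos (Real.cos θ ^ d) ≤ Real.sqrt d * θ := by
  set F : ℝ → ℝ := fun x => Real.sqrt d * x - Real.arccos (Real.cos x ^ d) with hF
  have hcont : ContinuousOn F (Set.Icc 0 (π / 2)) :=
    ((continuous_const.mul continuous_id).sub
      (Real.continuous_arccos.comp (Real.continuous_cos.pow d))).continuousOn
  have hderiv : ∀ x ∈ Set.Ioo (0 : ℝ) (π / 2),
      HasDerivAt F (Real.sqrt d * 1 -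
        -(1 / Real.sqrt (1 - (Real.cos x ^ d) ^ 2)) *
          ((d : ℝ) * Real.cos x ^ (d - 1) * (-Real.sin x))) x := by
    intro x hx
    have hc0 : 0 < Real.cos x := Real.cos_pos_of_mem_Ioo ⟨by linarith [hx.1, Real.pi_pos], hx.2⟩
    have hc1 : Real.cos x < 1 := by
      have := Real.cos_lt_cos_of_nonneg_of_le_pi (le_refl 0) (by linarith [hx.2, Real.pi_pos]) hx.1
      simpa using this
    have hpowlt : Real.cos x ^ d < 1 := pow_lt_one₀ hc0.le hc1 hd.ne'
    have hpowpos : 0 < Real.cos x ^ d := pow_pos hc0 d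
    have hne1 : Real.cos x ^ d ≠ -1 := by linarith
    have hne2 : Real.cos x ^ d ≠ 1 := ne_of_lt hpowlt
    have hpow : HasDerivAt (fun x => Real.cos x ^ d)
        ((d : ℝ) * Real.cos x ^ (d - 1) * (-Real.sin x)) x :=
      (Real.hasDerivAt_cos x).pow d
    have harc := (Real.hasDerivAt_arccos hne1 hne2).comp x hpow
    exact ((hasDerivAt_id x).const_mul (Real.sqrt d)).sub harc
  have hnonneg : ∀ x ∈ Set.Ioo (0 : ℝ) (π / 2),
      0 ≤ Real.sqrt d * 1 -
        -(1 / Real.sqrt (1 - (Real.cos x ^ d) ^ 2)) *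
          ((d : ℝ) * Real.cos x ^ (d - 1) * (-Real.sin x)) := by
    intro x hx
    set c := Real.cos x with hc
    set s := Real.sin x with hs
    have hc0 : 0 < c := Real.cos_pos_of_mem_Ioo ⟨by linarith [hx.1, Real.pi_pos], hx.2⟩
    have hc1 : c < 1 := by
      have := Real.cos_lt_cos_of_nonneg_of_le_pi (le_refl 0) (by linarith [hx.2, Real.pi_pos]) hx.1
      simpa using this
    have hs0 : 0 < s := Real.sin_pos_of_pos_of_lt_pi hx.1 (by linarith [hx.2, Real.pi_pos])
    have hpowlt : c ^ d < 1 := pow_lt_one₀ hc0.le hc1 hd.ne'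
    have hpowpos : 0 < c ^ d := pow_pos hc0 d
    have hApos : 0 < Real.sqrt (1 - (c ^ d) ^ 2) := by
      apply Real.sqrt_pos.2; nlinarith
    set A := Real.sqrt (1 - (c ^ d) ^ 2) with hA
    have hsq : s ^ 2 = 1 - c ^ 2 := Real.sin_sq x
    have hu0 : (0:ℝ) ≤ c ^ 2 := sq_nonneg c
    have hu1 : c ^ 2 ≤ 1 := by nlinarith
    have hB0 : 0 ≤ (d : ℝ) * c ^ (d - 1) * s := by positivity
    have hkey : (d : ℝ) * c ^ (d - 1) * s ≤ Real.sqrt d * A := by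
      have hBsq : ((d : ℝ) * c ^ (d - 1) * s) ^ 2 ≤ (d : ℝ) * (1 - (c ^ d) ^ 2) := by
        have haux := aux_geom d (c ^ 2) hu0 hu1
        have he1 : (c ^ (d - 1)) ^ 2 = (c ^ 2) ^ (d - 1) := by ring
        have he2 : (c ^ d) ^ 2 = (c ^ 2) ^ d := by ring
        have hd0 : (0:ℝ) ≤ (d : ℝ) := Nat.cast_nonneg d
        calc ((d : ℝ) * c ^ (d - 1) * s) ^ 2
            = (d : ℝ) ^ 2 * ((c ^ 2) ^ (d - 1) * (1 - c ^ 2)) := by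
              rw [← he1]; rw [mul_pow, mul_pow, hsq]; ring
          _ = (d : ℝ) * ((d : ℝ) * (c ^ 2) ^ (d - 1) * (1 - c ^ 2)) := by ring
          _ ≤ (d : ℝ) * (1 - (c ^ 2) ^ d) := mul_le_mul_of_nonneg_left haux hd0
          _ = (d : ℝ) * (1 - (c ^ d) ^ 2) := by rw [he2]
      have : Real.sqrt d * A = Real.sqrt ((d : ℝ) * (1 - (c ^ d) ^ 2)) := by
        rw [hA, ← Real.sqrt_mul (Nat.cast_nonneg d)]
      rw [this]
      calc (d : ℝ) * c ^ (d - 1) * s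
          = Real.sqrt (((d : ℝ) * c ^ (d - 1) * s) ^ 2) := (Real.sqrt_sq hB0).symm
        _ ≤ Real.sqrt ((d : ℝ) * (1 - (c ^ d) ^ 2)) := Real.sqrt_le_sqrt hBsq
    have hexpand : -(1 / A) * ((d : ℝ) * c ^ (d - 1) * (-s))
        = ((d : ℝ) * c ^ (d - 1) * s) / A := by ring
    rw [hexpand, mul_one, sub_nonneg, div_le_iff₀ hApos]
    exact hkey
  have hmono : MonotoneOn F (Set.Icc 0 (π / 2)) := by
    apply monotoneOn_of_deriv_nonneg (convex_Icc _ _) hcont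
    · intro x hx
      rw [interior_Icc] at hx
      exact ((hderiv x hx).differentiableAt).differentiableWithinAt
    · intro x hx
      rw [interior_Icc] at hx
      rw [(hderiv x hx).deriv]
      exact hnonneg x hx
  have h := hmono (Set.left_mem_Icc.2 (by linarith [Real.pi_pos])) ⟨h0, h1⟩ h0
  have hF0 : F 0 = 0 := by simp [hF, Real.arccos_one]
  rw [hF0] at h
  simpa [hF, sub_nonneg] using h
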